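/- Let 𝔽 be ℝ or ℂ, let D ∈ 𝔽^{d×n} be a dictionary of full row rank and A ∈ 𝔽^{m×d}. Suppose A satisfies the strong D-null space property of order s with constant c > 0. Let z₀ = D x₀ for some x₀ ∈ 𝔽^n, let y = A z₀ + w with ‖w‖₂ ≤ ε, and let x̂ be any minimizer of min ‖x‖₁ subject to ‖A D x − y‖₂ ≤ ε, with ẑ = D x̂. Then ‖ẑ − z₀‖₂ ≤ (2/c)·σ_s(x₀) + ε·( 2√n/(c·ν_A·ν_D) + 2/ν_A ), where ν_A and ν_D are the smallest positive singular values of A and D respectively. -/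

import Mathlib

open scoped BigOperators

section Defs

variable {𝕜 : Type*}

/-- ℓ¹ norm of a finitely-indexed vector. -/
noncomputable def norm1 [RCLike 𝕜] {ι : Type*} [Fintype ι] (x : ι → 𝕜) : ℝ :=
  ∑ i, ‖x i‖

/-- ℓ² norm of a finitely-indexed vector. -/
noncomputable def norm2 [RCLike 𝕜] {ι : Type*} [Fintype ι] (x : ι → 𝕜) : ℝ :=
  Real.sqrt (∑ i, ‖x i‖ ^ 2)

/-- Restriction of a vector to an index set `T` (zero outside `T`). -/
def restr [Zero 𝕜] {ι : Type*} [DecidableEq ι] (T : Finset ι) (x : ι → 𝕜) : ι → 𝕜 :=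
  fun i => if i ∈ T then x i else 0

/-- `x` has at most `s` nonzero entries. -/
def sparse [Zero 𝕜] {ι : Type*} (s : ℕ) (x : ι → 𝕜) : Prop :=
  {i | x i ≠ 0}.ncard ≤ s

/-- Null space property of order `s`. -/
def NSP [RCLike 𝕜] {m : ℕ} {ι : Type*} [Fintype ι] [DecidableEq ι]
    (M : Matrix (Fin m) ι 𝕜) (s : ℕ) : Prop :=
  ∀ v : ι → 𝕜, M.mulVec v = 0 → v ≠ 0 →
    ∀ T : Finset ι, T.card ≤ s → norm1 (restr T v) < norm1 (restr Tᶜ v)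

/-- `D`-null space property of order `s`. -/
def DNSP [RCLike 𝕜] {m d : ℕ} {ι : Type*} [Fintype ι] [DecidableEq ι]
    (A : Matrix (Fin m) (Fin d) 𝕜) (D : Matrix (Fin d) ι 𝕜) (s : ℕ) : Prop :=
  ∀ T : Finset ι, T.card ≤ s →
    ∀ v : ι → 𝕜, A.mulVec (D.mulVec v) = 0 → D.mulVec v ≠ 0 →
      ∃ u : ι → 𝕜, D.mulVec u = 0 ∧ norm1 (restr T v + u) < norm1 (restr Tᶜ v)

/-- Strong `D`-null space property of order `s` with constant `c`. -/
def SNSPc [RCLike 𝕜] {m d : ℕ} {ι : Type*} [Fintype ι] [DecidableEq ι]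
    (A : Matrix (Fin m) (Fin d) 𝕜) (D : Matrix (Fin d) ι 𝕜) (s : ℕ) (c : ℝ) : Prop :=
  ∀ v : ι → 𝕜, A.mulVec (D.mulVec v) = 0 →
    ∀ T : Finset ι, T.card ≤ s →
      ∃ u : ι → 𝕜, D.mulVec u = 0 ∧
        c * norm2 (D.mulVec v) ≤ norm1 (restr Tᶜ v) - norm1 (restr T v + u)

/-- Smallest positive singular value of a matrix: the infimum of the set of positive `σ`
such that `σ²` is an eigenvalue of `Mᴴ M`. -/
noncomputable def nuSV [RCLike 𝕜] {κ ι : Type*} [Fintype κ] [Fintype ι]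
    (M : Matrix κ ι 𝕜) : ℝ :=
  sInf {σ : ℝ | 0 < σ ∧ ∃ v : ι → 𝕜, v ≠ 0 ∧ (M.conjTranspose * M).mulVec v = ((σ : 𝕜) ^ 2) • v}

/-- ℓ¹ error of the best `s`-term approximation. -/
noncomputable def sigmaS [RCLike 𝕜] {ι : Type*} [Fintype ι] (s : ℕ) (x : ι → 𝕜) : ℝ :=
  sInf {r : ℝ | ∃ v : ι → 𝕜, sparse s v ∧ r = norm1 (x - v)}

/-- Spectral norm (ℓ² → ℓ² operator norm). -/
noncomputable def specNorm [RCLike 𝕜] {m d : ℕ} (A : Matrix (Fin m) (Fin d) 𝕜) : ℝ :=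
  sSup {r : ℝ | ∃ x : Fin d → 𝕜, norm2 x ≤ 1 ∧ r = norm2 (A.mulVec x)}

/-- ℓ¹ → ℓ² operator norm: the maximal ℓ² norm of a column. -/
noncomputable def norm12 [RCLike 𝕜] {d : ℕ} {ι : Type*} [Fintype ι]
    (M : Matrix (Fin d) ι 𝕜) : ℝ :=
  sSup {r : ℝ | ∃ j : ι, r = norm2 (fun i => M i j)}

end Defs

section Aux

variable {𝕜 : Type*} [RCLike 𝕜]

local notation "⟪" x ", " y "⟫" => @inner 𝕜 _ _ x y

lemma norm2_nonneg {ι : Type*} [Fintype ι] (x : ι → 𝕜) : 0 ≤ norm2 x :=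
  Real.sqrt_nonneg _

lemma norm2_eq_norm {k : ℕ} (x : Fin k → 𝕜) :
    norm2 x = ‖(WithLp.equiv 2 (Fin k → 𝕜)).symm x‖ := by
  rw [EuclideanSpace.norm_eq, norm2]
  rfl

lemma norm2_sq {k : ℕ} (x : Fin k → 𝕜) : (norm2 x) ^ 2 = ∑ i, ‖x i‖ ^ 2 :=
  Real.sq_sqrt (Finset.sum_nonneg fun i _ => sq_nonneg _)

lemma norm2_eq_zero {k : ℕ} {x : Fin k → 𝕜} (h : norm2 x = 0) : x = 0 := by
  have h2 : ∑ i, ‖x i‖ ^ 2 = 0 := by rw [← norm2_sq, h]; ring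
  funext i
  have := (Finset.sum_eq_zero_iff_of_nonneg (fun i _ => sq_nonneg ‖x i‖)).1 h2 i (Finset.mem_univ i)
  simpa [pow_eq_zero_iff] using this

lemma norm2_neg {k : ℕ} (x : Fin k → 𝕜) : norm2 (-x) = norm2 x := by
  simp [norm2]

lemma norm2_add_le {k : ℕ} (x y : Fin k → 𝕜) : norm2 (x + y) ≤ norm2 x + norm2 y := by
  simp only [norm2_eq_norm, map_add]
  exact norm_add_le _ _

lemma norm1_nonneg {ι : Type*} [Fintype ι] (x : ι → 𝕜) : 0 ≤ norm1 x :=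
  Finset.sum_nonneg fun i _ => norm_nonneg _

lemma norm1_le_sqrt_mul_norm2 {k : ℕ} (x : Fin k → 𝕜) :
    norm1 x ≤ Real.sqrt k * norm2 x := by
  have h := Finset.sum_mul_sq_le_sq_mul_sq Finset.univ (fun _ : Fin k => (1 : ℝ))
    (fun i => ‖x i‖)
  simp only [one_mul, one_pow, Finset.sum_const, Finset.card_univ, Fintype.card_fin,
    nsmul_eq_mul, mul_one] at h
  have h1 : norm1 x = Real.sqrt ((norm1 x) ^ 2) := (Real.sqrt_sq (norm1_nonneg x)).symm
  rw [h1, norm2]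
  rw [← Real.sqrt_mul (by positivity : (0:ℝ) ≤ (k:ℝ))]
  exact Real.sqrt_le_sqrt (by simpa [norm1] using h)

lemma nuSV_nonneg {κ ι : Type*} [Fintype κ] [Fintype ι] (M : Matrix κ ι 𝕜) :
    0 ≤ nuSV M :=
  Real.sInf_nonneg fun σ hσ => hσ.1.le

lemma norm2_sq_mulVec {a b : ℕ} (M : Matrix (Fin a) (Fin b) 𝕜) (x : Fin b → 𝕜) :
    ((norm2 (M.mulVec x)) ^ 2 : ℝ) =
      RCLike.re (dotProduct (star x) ((M.conjTranspose * M).mulVec x)) := by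
  rw [norm2_sq, ← Matrix.mulVec_mulVec, Matrix.dotProduct_mulVec, ← Matrix.star_mulVec]
  rw [dotProduct, map_sum]
  refine Finset.sum_congr rfl fun i _ => ?_
  rw [Pi.star_apply, RCLike.star_def, RCLike.conj_mul]
  rw [← RCLike.ofReal_pow]
  exact (RCLike.ofReal_re (K := 𝕜) _).symm

end Aux

section Spectral

variable {𝕜 : Type*} [RCLike 𝕜]

local notation "⟪" x ", " y "⟫" => @inner 𝕜 _ _ x y

lemma nuSV_le {a b : ℕ} (M : Matrix (Fin a) (Fin b) 𝕜) {σ : ℝ}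
    (hσ : 0 < σ)
    (h : ∃ v : Fin b → 𝕜, v ≠ 0 ∧ (M.conjTranspose * M).mulVec v = ((σ : 𝕜) ^ 2) • v) :
    nuSV M ≤ σ :=
  csInf_le ⟨0, fun _ hx => hx.1.le⟩ ⟨hσ, h⟩

lemma equiv_symm_sum {b : ℕ} (g : Fin b → (Fin b → 𝕜)) :
    (WithLp.equiv 2 (Fin b → 𝕜)).symm (∑ i, g i)
      = ∑ i, (WithLp.equiv 2 (Fin b → 𝕜)).symm (g i) :=
  map_sum ((WithLp.linearEquiv 2 𝕜 (Fin b → 𝕜)).symm) g Finset.univ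

lemma equiv_sum {b : ℕ} (g : Fin b → EuclideanSpace 𝕜 (Fin b)) :
    (WithLp.equiv 2 (Fin b → 𝕜)) (∑ i, g i)
      = ∑ i, (WithLp.equiv 2 (Fin b → 𝕜)) (g i) :=
  map_sum ((WithLp.linearEquiv 2 𝕜 (Fin b → 𝕜))) g Finset.univ

lemma mulVec_sum' {a b : ℕ} (M : Matrix (Fin a) (Fin b) 𝕜) (g : Fin b → (Fin b → 𝕜)) :
    M.mulVec (∑ i, g i) = ∑ i, M.mulVec (g i) := by
  simpa only [Matrix.mulVecLin_apply] using map_sum (Matrix.mulVecLin M) g Finset.univ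

lemma key_exists {a b : ℕ} (M : Matrix (Fin a) (Fin b) 𝕜) (v₀ : Fin b → 𝕜) :
    ∃ v : Fin b → 𝕜, M.mulVec v = M.mulVec v₀ ∧ nuSV M * norm2 v ≤ norm2 (M.mulVec v) := by
  classical
  have hH : (M.conjTranspose * M).IsHermitian := Matrix.isHermitian_conjTranspose_mul_self M
  set B := hH.eigenvectorBasis with hB
  set lam := hH.eigenvalues with hlamdef
  have hlam0 : ∀ i, 0 ≤ lam i :=
    fun i => Matrix.eigenvalues_conjTranspose_mul_self_nonneg M i
  have hEig : ∀ i, (M.conjTranspose * M).mulVec (⇑(B i)) = ((lam i : 𝕜)) • (⇑(B i)) := by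
    intro i
    rw [← RCLike.real_smul_eq_coe_smul (K := 𝕜)]
    exact hH.mulVec_eigenvectorBasis i
  have hMzero : ∀ i, lam i = 0 → M.mulVec (⇑(B i)) = 0 := by
    intro i h0
    apply norm2_eq_zero
    have hsq : (norm2 (M.mulVec (⇑(B i)))) ^ 2 = 0 := by
      rw [norm2_sq_mulVec, hEig i, h0]
      simp
    nlinarith [norm2_nonneg (M.mulVec (⇑(B i)))]
  set c : Fin b → 𝕜 := fun i => B.repr ((WithLp.equiv 2 (Fin b → 𝕜)).symm v₀) i with hc
  set c' : Fin b → 𝕜 := fun i => if lam i = 0 then 0 else c i with hc'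
  set vE : EuclideanSpace 𝕜 (Fin b) := ∑ i, c' i • B i with hvE
  set v : Fin b → 𝕜 := (WithLp.equiv 2 (Fin b → 𝕜)) vE with hv
  have hvfun : v = ∑ i, c' i • (⇑(B i)) := by
    rw [hv, hvE, equiv_sum]
    rfl
  have hv0fun : v₀ = ∑ i, c i • (⇑(B i)) := by
    have := B.sum_repr ((WithLp.equiv 2 (Fin b → 𝕜)).symm v₀)
    have h2 := congrArg (WithLp.equiv 2 (Fin b → 𝕜)) this
    rw [equiv_sum] at h2
    simpa [hc] using h2.symm
  constructor
  constructor
  · -- M v = M v₀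
    have : M.mulVec (v₀ - v) = 0 := by
      have hdiff : v₀ - v = ∑ i, (c i - c' i) • (⇑(B i)) := by
        rw [hvfun, hv0fun, ← Finset.sum_sub_distrib]
        congr 1; funext i; rw [sub_smul]
      rw [hdiff, mulVec_sum']
      apply Finset.sum_eq_zero
      intro i _
      by_cases h0 : lam i = 0
      · rw [Matrix.mulVec_smul, hMzero i h0, smul_zero]
      · have : c i - c' i = 0 := by simp [hc', if_neg h0]
        rw [this, zero_smul, Matrix.mulVec_zero]
    have hz : M.mulVec v₀ - M.mulVec v = 0 := by
      rw [← Matrix.mulVec_sub]; exact this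
    exact (sub_eq_zero.mp hz).symm
  · -- norm inequality
    have hnormv : (norm2 v) ^ 2 = ∑ i, ‖c' i‖ ^ 2 := by
      have h1 : norm2 v = ‖vE‖ := by
        rw [norm2_eq_norm, hv, Equiv.symm_apply_apply]
      rw [h1, ← inner_self_eq_norm_sq (𝕜 := 𝕜)]
      rw [hvE, B.orthonormal.inner_sum]
      rw [map_sum]
      refine Finset.sum_congr rfl fun i _ => ?_
      rw [RCLike.conj_mul, ← RCLike.ofReal_pow]
      exact RCLike.ofReal_re (K := 𝕜) _
    have hnormMv : (norm2 (M.mulVec v)) ^ 2 = ∑ i, lam i * ‖c' i‖ ^ 2 := by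
      rw [norm2_sq_mulVec]
      have hHv : (M.conjTranspose * M).mulVec v = ∑ i, ((lam i : 𝕜) * c' i) • (⇑(B i)) := by
        rw [hvfun, mulVec_sum']
        refine Finset.sum_congr rfl fun i _ => ?_
        rw [Matrix.mulVec_smul, hEig i, smul_smul, mul_comm]
      have hdot : dotProduct (star v) ((M.conjTranspose * M).mulVec v)
          = ⟪vE, (WithLp.equiv 2 (Fin b → 𝕜)).symm ((M.conjTranspose * M).mulVec v)⟫ := by
        exact dotProduct_comm _ _
      rw [hdot, hHv, equiv_symm_sum]
      have hsymm : ∀ i, (WithLp.equiv 2 (Fin b → 𝕜)).symm (((lam i : 𝕜) * c' i) • (⇑(B i)))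
          = ((lam i : 𝕜) * c' i) • B i := fun i => rfl
      simp_rw [hsymm]
      rw [hvE, B.orthonormal.inner_sum, map_sum]
      refine Finset.sum_congr rfl fun i _ => ?_
      have : (starRingEnd 𝕜) (c' i) * ((lam i : 𝕜) * c' i)
          = (lam i : 𝕜) * ((starRingEnd 𝕜) (c' i) * c' i) := by ring
      rw [this, RCLike.conj_mul, ← RCLike.ofReal_pow, ← RCLike.ofReal_mul]
      exact RCLike.ofReal_re (K := 𝕜) _
    have hterm : ∀ i, (nuSV M) ^ 2 * ‖c' i‖ ^ 2 ≤ lam i * ‖c' i‖ ^ 2 := by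
      intro i
      by_cases h0 : lam i = 0
      · have : c' i = 0 := by simp [hc', if_pos h0]
        simp [this]
      · have hlpos : 0 < lam i := lt_of_le_of_ne (hlam0 i) (Ne.symm h0)
        have hBne : (⇑(B i) : Fin b → 𝕜) ≠ 0 := by
          intro hcontra
          have : (B i : EuclideanSpace 𝕜 (Fin b)) = 0 := by
            have h2 := congrArg (WithLp.equiv 2 (Fin b → 𝕜)).symm hcontra
            simpa using h2
          have hn := B.orthonormal.1 i
          rw [this, norm_zero] at hn
          norm_num at hn
        have hle : nuSV M ≤ Real.sqrt (lam i) := by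
          apply nuSV_le M (Real.sqrt_pos.mpr hlpos)
          refine ⟨⇑(B i), hBne, ?_⟩
          rw [hEig i]
          congr 1
          rw [← RCLike.ofReal_pow, Real.sq_sqrt (hlam0 i)]
        have h2 : (nuSV M) ^ 2 ≤ lam i := by
          have := pow_le_pow_left₀ (nuSV_nonneg M) hle 2
          rwa [Real.sq_sqrt (hlam0 i)] at this
        exact mul_le_mul_of_nonneg_right h2 (sq_nonneg _)
    have hsq : (nuSV M * norm2 v) ^ 2 ≤ (norm2 (M.mulVec v)) ^ 2 := by
      rw [mul_pow, hnormv, hnormMv, Finset.mul_sum]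
      exact Finset.sum_le_sum fun i _ => hterm i
    have h1 : 0 ≤ nuSV M * norm2 v := mul_nonneg (nuSV_nonneg M) (norm2_nonneg v)
    have h3 := Real.sqrt_le_sqrt hsq
    rwa [Real.sqrt_sq h1, Real.sqrt_sq (norm2_nonneg _)] at h3


lemma nuSV_pos {a b : ℕ} (M : Matrix (Fin a) (Fin b) 𝕜) (hM : M ≠ 0) : 0 < nuSV M := by
  classical
  have hH : (M.conjTranspose * M).IsHermitian := Matrix.isHermitian_conjTranspose_mul_self M
  set B := hH.eigenvectorBasis with hB
  set lam := hH.eigenvalues with hlamdef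
  have hlam0 : ∀ i, 0 ≤ lam i :=
    fun i => Matrix.eigenvalues_conjTranspose_mul_self_nonneg M i
  have hEig : ∀ i, (M.conjTranspose * M).mulVec (⇑(B i)) = ((lam i : 𝕜)) • (⇑(B i)) := by
    intro i
    rw [← RCLike.real_smul_eq_coe_smul (K := 𝕜)]
    exact hH.mulVec_eigenvectorBasis i
  have hMzero : ∀ i, lam i = 0 → M.mulVec (⇑(B i)) = 0 := by
    intro i h0
    apply norm2_eq_zero
    have hsq : (norm2 (M.mulVec (⇑(B i)))) ^ 2 = 0 := by
      rw [norm2_sq_mulVec, hEig i, h0]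
      simp
    nlinarith [norm2_nonneg (M.mulVec (⇑(B i)))]
  have hBne : ∀ i, (⇑(B i) : Fin b → 𝕜) ≠ 0 := by
    intro i hcontra
    have h0 : (B i : EuclideanSpace 𝕜 (Fin b)) = 0 := by
      have h2 := congrArg (WithLp.equiv 2 (Fin b → 𝕜)).symm hcontra
      simpa using h2
    have hn := B.orthonormal.1 i
    rw [h0, norm_zero] at hn
    norm_num at hn
  set S : Set ℝ := {σ : ℝ | 0 < σ ∧ ∃ v : Fin b → 𝕜, v ≠ 0 ∧
      (M.conjTranspose * M).mulVec v = ((σ : 𝕜) ^ 2) • v} with hS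
  have hmem : ∀ i, lam i ≠ 0 → Real.sqrt (lam i) ∈ S := by
    intro i h0
    have hlpos : 0 < lam i := lt_of_le_of_ne (hlam0 i) (Ne.symm h0)
    refine ⟨Real.sqrt_pos.mpr hlpos, ⇑(B i), hBne i, ?_⟩
    rw [hEig i]
    congr 1
    rw [← RCLike.ofReal_pow, Real.sq_sqrt (hlam0 i)]
  have hne : ∃ i, lam i ≠ 0 := by
    by_contra hcon
    push_neg at hcon
    apply hM
    have hMx : ∀ x : Fin b → 𝕜, M.mulVec x = 0 := by
      intro x
      have hx : x = ∑ i, (B.repr ((WithLp.equiv 2 (Fin b → 𝕜)).symm x) i) • (⇑(B i)) := by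
        have h1 := B.sum_repr ((WithLp.equiv 2 (Fin b → 𝕜)).symm x)
        have h2 := congrArg (WithLp.equiv 2 (Fin b → 𝕜)) h1
        rw [equiv_sum] at h2
        simpa using h2.symm
      rw [hx, mulVec_sum']
      apply Finset.sum_eq_zero
      intro i _
      rw [Matrix.mulVec_smul, hMzero i (hcon i), smul_zero]
    ext i j
    have h3 := congrFun (hMx (Pi.single j 1)) i
    rw [Matrix.mulVec_single] at h3
    simpa using h3
  have hsub : S ⊆ Set.range (fun i => Real.sqrt (lam i)) := by
    rintro σ ⟨hσpos, w, hw0, hww⟩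
    set wE : EuclideanSpace 𝕜 (Fin b) := (WithLp.equiv 2 (Fin b → 𝕜)).symm w with hwE
    obtain ⟨i, hi⟩ : ∃ i, B.repr wE i ≠ 0 := by
      by_contra hcon
      push_neg at hcon
      apply hw0
      have hr : B.repr wE = 0 := by
        ext i
        simpa using hcon i
      have : wE = 0 := by
        have := B.repr.injective (by rw [hr]; simp : B.repr wE = B.repr 0)
        exact this
      have h2 := congrArg (WithLp.equiv 2 (Fin b → 𝕜)) this
      rw [hwE, Equiv.apply_symm_apply] at h2
      exact h2
    have h1 : ⟪(B i : EuclideanSpace 𝕜 (Fin b)),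
        (WithLp.equiv 2 (Fin b → 𝕜)).symm ((M.conjTranspose * M).mulVec w)⟫
        = ((σ:𝕜)^2) * B.repr wE i := by
      rw [hww]
      have h0 : (WithLp.equiv 2 (Fin b → 𝕜)).symm (((σ:𝕜)^2) • w) = ((σ:𝕜)^2) • wE := rfl
      rw [h0, inner_smul_right, ← B.repr_apply_apply]
    have h2 : ⟪(B i : EuclideanSpace 𝕜 (Fin b)),
        (WithLp.equiv 2 (Fin b → 𝕜)).symm ((M.conjTranspose * M).mulVec w)⟫
        = ((lam i : 𝕜)) * B.repr wE i := by
      have e1 : ⟪(B i : EuclideanSpace 𝕜 (Fin b)),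
          (WithLp.equiv 2 (Fin b → 𝕜)).symm ((M.conjTranspose * M).mulVec w)⟫
          = dotProduct (star (⇑(B i))) ((M.conjTranspose * M).mulVec w) :=
        dotProduct_comm _ _
      rw [e1, Matrix.dotProduct_mulVec]
      have e2 : Matrix.vecMul (star (⇑(B i))) (M.conjTranspose * M)
          = ((lam i : 𝕜)) • star (⇑(B i)) := by
        have e3 : star ((M.conjTranspose * M).mulVec (⇑(B i)))
            = Matrix.vecMul (star (⇑(B i))) (M.conjTranspose * M) := by
          rw [Matrix.star_mulVec, hH.eq]
        rw [← e3, hEig i, star_smul]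
        congr 1
        simp [RCLike.star_def, RCLike.conj_ofReal]
      rw [e2, smul_dotProduct]
      congr 1
      have e4 : dotProduct (star (⇑(B i))) w = ⟪(B i : EuclideanSpace 𝕜 (Fin b)), wE⟫ :=
        dotProduct_comm _ _
      rw [e4, ← B.repr_apply_apply]
    have hkey : ((lam i : 𝕜)) = (σ:𝕜)^2 := by
      have := h2.symm.trans h1
      exact mul_right_cancel₀ hi this
    have hlam : lam i = σ^2 := by
      have : ((lam i : 𝕜)) = ((σ^2 : ℝ) : 𝕜) := by rw [hkey]; push_cast; ring
      exact_mod_cast this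
    refine ⟨i, ?_⟩
    simp only [hlam]
    exact Real.sqrt_sq hσpos.le
  obtain ⟨i₀, hi₀⟩ := hne
  have hSne : S.Nonempty := ⟨Real.sqrt (lam i₀), hmem i₀ hi₀⟩
  have hfin : S.Finite := (Set.finite_range _).subset hsub
  have hmemInf : sInf S ∈ S := hSne.csInf_mem hfin
  exact hmemInf.1

end Spectral

section Comb

variable {𝕜 : Type*} [RCLike 𝕜]

lemma norm1_restr {ι : Type*} [Fintype ι] [DecidableEq ι] (T : Finset ι) (f : ι → 𝕜) :
    norm1 (restr T f) = ∑ i ∈ T, ‖f i‖ := by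
  rw [norm1, ← Finset.sum_add_sum_compl T]
  have h1 : ∑ i ∈ T, ‖restr T f i‖ = ∑ i ∈ T, ‖f i‖ :=
    Finset.sum_congr rfl fun i hi => by rw [restr, if_pos hi]
  have h2 : ∑ i ∈ Tᶜ, ‖restr T f i‖ = 0 :=
    Finset.sum_eq_zero fun i hi => by
      rw [restr, if_neg (Finset.mem_compl.mp hi), norm_zero]
  rw [h1, h2, add_zero]

lemma norm1_restr_add {ι : Type*} [Fintype ι] [DecidableEq ι] (T : Finset ι) (f u : ι → 𝕜) :
    norm1 (restr T f + u) = ∑ i ∈ T, ‖f i + u i‖ + ∑ i ∈ Tᶜ, ‖u i‖ := by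
  rw [norm1, ← Finset.sum_add_sum_compl T]
  congr 1
  · refine Finset.sum_congr rfl fun i hi => ?_
    rw [Pi.add_apply, restr, if_pos hi]
  · refine Finset.sum_congr rfl fun i hi => ?_
    rw [Pi.add_apply, restr, if_neg (Finset.mem_compl.mp hi), zero_add]

lemma norm1_sub_le {ι : Type*} [Fintype ι] (x y : ι → 𝕜) :
    norm1 (x - y) ≤ norm1 x + norm1 y := by
  rw [norm1, norm1, norm1, ← Finset.sum_add_distrib]
  exact Finset.sum_le_sum fun i _ => norm_sub_le _ _

lemma sigmaS_nonneg {ι : Type*} [Fintype ι] (s : ℕ) (x : ι → 𝕜) : 0 ≤ sigmaS s x :=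
  Real.sInf_nonneg fun r hr => by obtain ⟨v, _, rfl⟩ := hr; exact norm1_nonneg _

lemma comb {m d n s : ℕ} (A : Matrix (Fin m) (Fin d) 𝕜) (D : Matrix (Fin d) (Fin n) 𝕜)
    (c : ℝ) (hSNSP : SNSPc A D s c)
    (x₀ : Fin n → 𝕜) (w : Fin m → 𝕜) (ε : ℝ) (hw : norm2 w ≤ ε)
    (y : Fin m → 𝕜) (hy : y = A.mulVec (D.mulVec x₀) + w)
    (x' : Fin n → 𝕜)
    (hmin : ∀ x : Fin n → 𝕜, norm2 (A.mulVec (D.mulVec x) - y) ≤ ε → norm1 x' ≤ norm1 x)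
    (v₁ : Fin n → 𝕜) (hv₁ : A.mulVec (D.mulVec (x' - x₀ - v₁)) = 0) :
    c * norm2 (D.mulVec (x' - x₀ - v₁)) ≤ 2 * sigmaS s x₀ + norm1 v₁ := by
  classical
  set X := norm2 (D.mulVec (x' - x₀ - v₁)) with hX
  set vt : Fin n → 𝕜 := x' - x₀ - v₁ with hvt
  have key : ∀ g : Fin n → 𝕜, sparse s g → c * X ≤ 2 * norm1 (x₀ - g) + norm1 v₁ := by
    intro g hg
    set T : Finset (Fin n) := (Set.toFinite {i | g i ≠ 0}).toFinset with hT
    have hTcard : T.card ≤ s := by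
      rw [hT, ← Set.ncard_eq_toFinset_card]
      exact hg
    obtain ⟨u, hu, hineq⟩ := hSNSP vt hv₁ T hTcard
    have hfeas' : norm2 (A.mulVec (D.mulVec (x₀ - u)) - y) ≤ ε := by
      rw [Matrix.mulVec_sub, hu, sub_zero, hy]
      have h0 : A.mulVec (D.mulVec x₀) - (A.mulVec (D.mulVec x₀) + w) = -w := by
        funext i
        simp
      rw [h0, norm2_neg]
      exact hw
    have hminu := hmin (x₀ - u) hfeas'
    have c1 : norm1 (x₀ + vt) ≤ norm1 x' + norm1 v₁ := by
      have h0 : x₀ + vt = x' - v₁ := by rw [hvt]; ring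
      rw [h0]
      exact norm1_sub_le x' v₁
    have c2T : ∑ i ∈ T, ‖(x₀ - u) i‖ - ∑ i ∈ T, ‖vt i + u i‖ ≤ ∑ i ∈ T, ‖(x₀ + vt) i‖ := by
      rw [sub_le_iff_le_add, ← Finset.sum_add_distrib]
      refine Finset.sum_le_sum fun i _ => ?_
      have h0 : (x₀ - u) i = (x₀ + vt) i - (vt i + u i) := by
        simp only [Pi.sub_apply, Pi.add_apply]
        ring
      rw [h0]
      exact norm_sub_le _ _
    have c2Tc : ∑ i ∈ Tᶜ, ‖vt i‖ - ∑ i ∈ Tᶜ, ‖x₀ i‖ ≤ ∑ i ∈ Tᶜ, ‖(x₀ + vt) i‖ := by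
      rw [sub_le_iff_le_add, ← Finset.sum_add_distrib]
      refine Finset.sum_le_sum fun i _ => ?_
      have h0 : vt i = (x₀ + vt) i - x₀ i := by simp
      rw [h0]
      exact norm_sub_le _ _
    have c2 : norm1 (x₀ + vt) = ∑ i ∈ T, ‖(x₀ + vt) i‖ + ∑ i ∈ Tᶜ, ‖(x₀ + vt) i‖ := by
      rw [norm1, Finset.sum_add_sum_compl]
    have c3 : norm1 (x₀ - u) = ∑ i ∈ T, ‖(x₀ - u) i‖ + ∑ i ∈ Tᶜ, ‖(x₀ - u) i‖ := by
      rw [norm1, Finset.sum_add_sum_compl]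
    have c4 : ∑ i ∈ Tᶜ, ‖(x₀ - u) i‖ ≤ ∑ i ∈ Tᶜ, ‖x₀ i‖ + ∑ i ∈ Tᶜ, ‖u i‖ := by
      rw [← Finset.sum_add_distrib]
      exact Finset.sum_le_sum fun i _ => norm_sub_le _ _
    have c5 : norm1 (restr Tᶜ vt) = ∑ i ∈ Tᶜ, ‖vt i‖ := norm1_restr Tᶜ vt
    have c6 : norm1 (restr T vt + u) = ∑ i ∈ T, ‖vt i + u i‖ + ∑ i ∈ Tᶜ, ‖u i‖ :=
      norm1_restr_add T vt u
    have c7 : ∑ i ∈ Tᶜ, ‖x₀ i‖ ≤ norm1 (x₀ - g) := by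
      have h0 : ∀ i ∈ Tᶜ, ‖x₀ i‖ = ‖(x₀ - g) i‖ := by
        intro i hi
        have hgi : g i = 0 := by
          have := Finset.mem_compl.mp hi
          rw [hT, Set.Finite.mem_toFinset] at this
          simpa using this
        simp [hgi]
      rw [Finset.sum_congr rfl h0, norm1]
      exact Finset.sum_le_sum_of_subset_of_nonneg (Finset.subset_univ _)
        fun i _ _ => norm_nonneg _
    rw [c5, c6] at hineq
    linarith
  have hne : Set.Nonempty {r : ℝ | ∃ v : Fin n → 𝕜, sparse s v ∧ r = norm1 (x₀ - v)} := by
    refine ⟨norm1 (x₀ - 0), 0, ?_, rfl⟩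
    simp [sparse]
  have hlb : ∀ r ∈ {r : ℝ | ∃ v : Fin n → 𝕜, sparse s v ∧ r = norm1 (x₀ - v)},
      (c * X - norm1 v₁) / 2 ≤ r := by
    rintro r ⟨g, hg, rfl⟩
    have := key g hg
    linarith
  have hinf := le_csInf hne hlb
  have : sigmaS s x₀ = sInf {r : ℝ | ∃ v : Fin n → 𝕜, sparse s v ∧ r = norm1 (x₀ - v)} := rfl
  rw [this]
  linarith

end Comb

/-- stability of ℓ₁-synthesis under the strong `D`-null space property. -/
theorem stmt4 {𝕜 : Type*} [RCLike 𝕜] {m d n s : ℕ}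
    (A : Matrix (Fin m) (Fin d) 𝕜) (D : Matrix (Fin d) (Fin n) 𝕜)
    (hD : Function.Surjective D.mulVec)
    (c : ℝ) (hc : 0 < c) (hSNSP : SNSPc A D s c)
    (x₀ : Fin n → 𝕜) (w : Fin m → 𝕜) (ε : ℝ) (hw : norm2 w ≤ ε)
    (y : Fin m → 𝕜) (hy : y = A.mulVec (D.mulVec x₀) + w)
    (x' : Fin n → 𝕜)
    (hfeas : norm2 (A.mulVec (D.mulVec x') - y) ≤ ε)
    (hmin : ∀ x : Fin n → 𝕜, norm2 (A.mulVec (D.mulVec x) - y) ≤ ε → norm1 x' ≤ norm1 x) :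
    norm2 (D.mulVec x' - D.mulVec x₀) ≤
      (2 / c) * sigmaS s x₀ +
        ε * (2 * Real.sqrt n / (c * nuSV A * nuSV D) + 2 / nuSV A) := by
  classical
  have hε : 0 ≤ ε := le_trans (norm2_nonneg w) hw
  have hσ : 0 ≤ sigmaS s x₀ := sigmaS_nonneg s x₀
  have hfac : 0 ≤ ε * (2 * Real.sqrt n / (c * nuSV A * nuSV D) + 2 / nuSV A) := by
    apply mul_nonneg hε
    apply add_nonneg
    · apply div_nonneg (by positivity)
      exact mul_nonneg (mul_nonneg hc.le (nuSV_nonneg A)) (nuSV_nonneg D)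
    · exact div_nonneg (by norm_num) (nuSV_nonneg A)
  by_cases hD0 : D = 0
  · have h0 : D.mulVec x' - D.mulVec x₀ = 0 := by
      rw [hD0, Matrix.zero_mulVec, Matrix.zero_mulVec, sub_zero]
    rw [h0]
    have : norm2 (0 : Fin d → 𝕜) = 0 := by simp [norm2]
    rw [this]
    have h1 : 0 ≤ (2 / c) * sigmaS s x₀ := mul_nonneg (by positivity) hσ
    linarith
  by_cases hA0 : A = 0
  · have hv₁ : A.mulVec (D.mulVec (x' - x₀ - 0)) = 0 := by
      rw [hA0, Matrix.zero_mulVec]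
    have h := comb A D c hSNSP x₀ w ε hw y hy x' hmin 0 hv₁
    have h0 : norm1 (0 : Fin n → 𝕜) = 0 := by simp [norm1]
    have h1 : D.mulVec (x' - x₀ - 0) = D.mulVec x' - D.mulVec x₀ := by
      rw [sub_zero, Matrix.mulVec_sub]
    rw [h0, h1] at h
    have h2 : norm2 (D.mulVec x' - D.mulVec x₀) ≤ (2 / c) * sigmaS s x₀ := by
      rw [div_mul_eq_mul_div, le_div_iff₀ hc]
      linarith
    linarith
  · have hAp : 0 < nuSV A := nuSV_pos A hA0
    have hDp : 0 < nuSV D := nuSV_pos D hD0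
    set z : Fin d → 𝕜 := D.mulVec x' - D.mulVec x₀ with hz
    have hAz : norm2 (A.mulVec z) ≤ 2 * ε := by
      have h0 : A.mulVec z = (A.mulVec (D.mulVec x') - y) + w := by
        rw [hz, Matrix.mulVec_sub, hy]
        funext i
        simp only [Pi.sub_apply, Pi.add_apply]
        ring
      rw [h0]
      have := norm2_add_le (A.mulVec (D.mulVec x') - y) w
      linarith
    obtain ⟨z₂, hz₂eq, hz₂⟩ := key_exists A z
    have hz₂small : norm2 z₂ ≤ 2 * ε / nuSV A := by
      rw [le_div_iff₀ hAp, mul_comm]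
      calc nuSV A * norm2 z₂ ≤ norm2 (A.mulVec z₂) := hz₂
        _ = norm2 (A.mulVec z) := by rw [hz₂eq]
        _ ≤ 2 * ε := hAz
    obtain ⟨p, hp⟩ := hD z₂
    obtain ⟨v₁, hv₁eq, hv₁n⟩ := key_exists D p
    have hDv₁ : D.mulVec v₁ = z₂ := by rw [hv₁eq, hp]
    have hv₁2 : norm2 v₁ ≤ 2 * ε / (nuSV A * nuSV D) := by
      rw [le_div_iff₀ (mul_pos hAp hDp)]
      have h0 : nuSV D * norm2 v₁ ≤ 2 * ε / nuSV A := by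
        calc nuSV D * norm2 v₁ ≤ norm2 (D.mulVec v₁) := hv₁n
          _ = norm2 z₂ := by rw [hDv₁]
          _ ≤ 2 * ε / nuSV A := hz₂small
      have h1 : nuSV A * (nuSV D * norm2 v₁) ≤ nuSV A * (2 * ε / nuSV A) :=
        mul_le_mul_of_nonneg_left h0 hAp.le
      rw [mul_div_cancel₀ _ (ne_of_gt hAp)] at h1
      calc norm2 v₁ * (nuSV A * nuSV D) = nuSV A * (nuSV D * norm2 v₁) := by ring
        _ ≤ 2 * ε := h1
    have hv₁1 : norm1 v₁ ≤ Real.sqrt n * (2 * ε / (nuSV A * nuSV D)) :=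
      (norm1_le_sqrt_mul_norm2 v₁).trans
        (mul_le_mul_of_nonneg_left hv₁2 (Real.sqrt_nonneg _))
    have hDvt : D.mulVec (x' - x₀ - v₁) = z - z₂ := by
      rw [Matrix.mulVec_sub, Matrix.mulVec_sub, hDv₁, hz]
    have hker : A.mulVec (D.mulVec (x' - x₀ - v₁)) = 0 := by
      rw [hDvt, Matrix.mulVec_sub, hz₂eq, sub_self]
    have hcomb := comb A D c hSNSP x₀ w ε hw y hy x' hmin v₁ hker
    rw [hDvt] at hcomb
    have htri : norm2 z ≤ norm2 (z - z₂) + norm2 z₂ := by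
      have h0 : z = (z - z₂) + z₂ := by ring
      calc norm2 z = norm2 ((z - z₂) + z₂) := by rw [← h0]
        _ ≤ norm2 (z - z₂) + norm2 z₂ := norm2_add_le _ _
    have h1 : norm2 (z - z₂) ≤ (2 * sigmaS s x₀ + norm1 v₁) / c := by
      rw [le_div_iff₀ hc, mul_comm]
      exact hcomb
    have h2 : norm2 z ≤ (2 * sigmaS s x₀ + Real.sqrt n * (2 * ε / (nuSV A * nuSV D))) / c
        + 2 * ε / nuSV A := by
      have h3 : (2 * sigmaS s x₀ + norm1 v₁) / c
          ≤ (2 * sigmaS s x₀ + Real.sqrt n * (2 * ε / (nuSV A * nuSV D))) / c := by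
        have h4 : norm1 v₁ ≤ Real.sqrt n * (2 * ε / (nuSV A * nuSV D)) := hv₁1
        gcongr
      linarith
    have heq : (2 * sigmaS s x₀ + Real.sqrt n * (2 * ε / (nuSV A * nuSV D))) / c
        + 2 * ε / nuSV A
        = (2 / c) * sigmaS s x₀ +
          ε * (2 * Real.sqrt n / (c * nuSV A * nuSV D) + 2 / nuSV A) := by
      field_simp
      ring
    rw [heq] at h2
    exact h2
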